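/- Let k ≥ 2 and Δ ≥ 1, and let 𝒮 be a simple set family on a finite universe V that is a sunflower-bouquet with nonempty core U = {u₁, …, u_m}, in which every set has cardinality at most k and every element lies in at most Δ sets of 𝒮. For i ∈ [m] let V_i = ⋃_{S ∈ 𝒮, u_i ∈ S} (S \ {u_i}). Then there exists a map g' : V → [0,1]^{(kΔ)²} such that: (i) ‖g'(S)‖_∞ ≤ 1 for every S ∈ 𝒮; (ii) ‖g'(S)‖_∞ ≤ 1 for every S ⊆ V with S ∩ U = ∅ and |S| ≤ k; and (iii) ‖g'(S)‖_∞ > 1 for every i ∈ [m] and every S ⊆ {u_i} ∪ V_i with u_i ∈ S and S ∉ 𝒮^↓. -/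

import Mathlib

/-- If every term of a sum is in `[0, c]` and at most one term is nonzero,
the sum is at most `c`. -/
lemma sum_le_of_at_most_one_pos {V : Type*} [DecidableEq V] {A : Finset V} {f : V → ℝ}
    {c : ℝ} (hc : 0 ≤ c) (h1 : ∀ v ∈ A, 0 ≤ f v ∧ f v ≤ c)
    (h2 : ∀ v ∈ A, ∀ w ∈ A, v ≠ w → f v = 0 ∨ f w = 0) :
    ∑ v ∈ A, f v ≤ c := by
  by_cases hA : ∃ v ∈ A, f v ≠ 0
  · obtain ⟨v, hv, hfv⟩ := hA
    have : ∑ w ∈ A, f w = f v + ∑ w ∈ A.erase v, f w := by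
      rw [← Finset.sum_insert (Finset.notMem_erase v A), Finset.insert_erase hv]
    rw [this]
    have hz : ∑ w ∈ A.erase v, f w = 0 := by
      apply Finset.sum_eq_zero
      intro w hw
      rcases h2 v hv w (Finset.mem_of_mem_erase hw) (Finset.ne_of_mem_erase hw).symm with h | h
      · exact absurd h hfv
      · exact h
    rw [hz, add_zero]
    exact (h1 v hv).2
  · push_neg at hA
    rw [Finset.sum_eq_zero hA]
    exact hc

/-- Step 2 of the sunflower-bouquet embedding: pinning down intra-sunflower sets,
using `(kΔ)²` dimensions. Here the core is `U = {u 1, …, u m}` and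
`V_i = ⋃_{S ∈ 𝒮, u i ∈ S} (S \ {u i})`. -/
theorem sunflower_bouquet_intra_sunflower_embedding
    {V : Type*} [Fintype V] [DecidableEq V]
    (k Δ m : ℕ) (hk : 2 ≤ k) (hΔ : 1 ≤ Δ) (hm : 1 ≤ m)
    (u : Fin m → V) (hu : Function.Injective u)
    (𝒮 : Finset (Finset V))
    (hsimple : ∀ S₁ ∈ 𝒮, ∀ S₂ ∈ 𝒮, S₁ ≠ S₂ → (S₁ ∩ S₂).card ≤ 1)
    (hcoreone : ∀ S ∈ 𝒮, (S ∩ Finset.univ.image u).card = 1)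
    (hcorecov : ∀ i : Fin m, ∃ S ∈ 𝒮, u i ∈ S)
    (hbouquet : ∀ S₁ ∈ 𝒮, ∀ S₂ ∈ 𝒮, (S₁ ∩ S₂).Nonempty →
        S₁ ∩ Finset.univ.image u = S₂ ∩ Finset.univ.image u ∧
        S₁ ∩ Finset.univ.image u = S₁ ∩ S₂)
    (hcard : ∀ S ∈ 𝒮, S.card ≤ k)
    (hdeg : ∀ v : V, (𝒮.filter (fun S => v ∈ S)).card ≤ Δ) :
    ∃ g' : V → Fin ((k * Δ) ^ 2) → ℝ,
      (∀ v j, 0 ≤ g' v j ∧ g' v j ≤ 1) ∧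
      -- (i) every set in the family has sum at most 1 in every coordinate
      (∀ S ∈ 𝒮, ∀ j, ∑ v ∈ S, g' v j ≤ 1) ∧
      -- (ii) small sets avoiding the core have sum at most 1 in every coordinate
      (∀ S : Finset V, S ∩ Finset.univ.image u = ∅ → S.card ≤ k →
        ∀ j, ∑ v ∈ S, g' v j ≤ 1) ∧
      -- (iii) intra-sunflower sets not in the downward closure exceed 1 in some coordinate
      (∀ i : Fin m, ∀ S : Finset V,
        S ⊆ insert (u i) ((𝒮.filter (fun T => u i ∈ T)).biUnion (fun T => T.erase (u i))) →
        u i ∈ S → (¬ ∃ T ∈ 𝒮, S ⊆ T) →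
        ∃ j, 1 < ∑ v ∈ S, g' v j) := by
  classical
  set U : Finset V := Finset.univ.image u with hUdef
  have hk0 : (0:ℝ) < (k:ℝ) := by positivity
  have hkΔ : 0 < k * Δ := Nat.mul_pos (by omega) (by omega)
  -- uniqueness of the set containing a non-core vertex
  have huniq : ∀ v : V, v ∉ U → ∀ T₁ ∈ 𝒮, ∀ T₂ ∈ 𝒮, v ∈ T₁ → v ∈ T₂ → T₁ = T₂ := by
    intro v hv T₁ h₁ T₂ h₂ hv₁ hv₂
    by_contra hne
    obtain ⟨-, h⟩ := hbouquet T₁ h₁ T₂ h₂ ⟨v, Finset.mem_inter.2 ⟨hv₁, hv₂⟩⟩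
    have : v ∈ T₁ ∩ U := h ▸ Finset.mem_inter.2 ⟨hv₁, hv₂⟩
    exact hv (Finset.mem_inter.1 this).2
  -- uniqueness of the core index of a set
  have hcoreuniq : ∀ T ∈ 𝒮, ∀ i j : Fin m, u i ∈ T → u j ∈ T → i = j := by
    intro T hT i j hi hj
    have h1 := hcoreone T hT
    obtain ⟨a, ha⟩ := Finset.card_eq_one.1 h1
    have hia : u i = a := by
      have : u i ∈ T ∩ U := Finset.mem_inter.2 ⟨hi, Finset.mem_image_of_mem u (Finset.mem_univ i)⟩
      rw [ha] at this; exact Finset.mem_singleton.1 this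
    have hja : u j = a := by
      have : u j ∈ T ∩ U := Finset.mem_inter.2 ⟨hj, Finset.mem_image_of_mem u (Finset.mem_univ j)⟩
      rw [ha] at this; exact Finset.mem_singleton.1 this
    exact hu (hia.trans hja.symm)
  -- choice of the set containing a vertex
  obtain ⟨Tof, hTof⟩ : ∃ Tof : V → Finset V, ∀ v ∉ U, ∀ T ∈ 𝒮, v ∈ T → Tof v = T := by
    refine ⟨fun v => if h : ∃ T ∈ 𝒮, v ∈ T then h.choose else ∅, ?_⟩
    intro v hv T hT hvT
    have h : ∃ T ∈ 𝒮, v ∈ T := ⟨T, hT, hvT⟩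
    simp only [dif_pos h]
    obtain ⟨h1, h2⟩ := h.choose_spec
    exact huniq v hv _ h1 T hT h2 hvT
  -- choice of the core index of a set
  obtain ⟨cI, hcI⟩ : ∃ cI : Finset V → Fin m, ∀ T ∈ 𝒮, ∀ i, u i ∈ T → cI T = i := by
    refine ⟨fun T => if h : ∃ i, u i ∈ T then h.choose else ⟨0, hm⟩, ?_⟩
    intro T hT i hi
    have h : ∃ i, u i ∈ T := ⟨i, hi⟩
    simp only [dif_pos h]
    exact hcoreuniq T hT _ i h.choose_spec hi
  -- petal index and position
  set Pf : V → ℕ := fun v => ((𝒮.filter (fun T' => u (cI (Tof v)) ∈ T')).toList).idxOf (Tof v)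
    with hPfdef
  set Sf : V → ℕ := fun v => ((Tof v).toList).idxOf v with hSfdef
  set Nf : V → ℕ := fun v => Pf v * k + Sf v with hNfdef
  -- basic facts about Pf, Sf, Nf for genuine petal vertices
  have hPf_eq : ∀ v ∉ U, ∀ T ∈ 𝒮, v ∈ T → ∀ i : Fin m, u i ∈ T →
      Pf v = ((𝒮.filter (fun T' => u i ∈ T')).toList).idxOf T := by
    intro v hv T hT hvT i hi
    have h1 : Tof v = T := hTof v hv T hT hvT
    have h2 : cI T = i := hcI T hT i hi
    simp only [hPfdef, h1, h2]
  have hfacts : ∀ v ∉ U, ∀ T ∈ 𝒮, v ∈ T →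
      Pf v < Δ ∧ Sf v < k ∧ Nf v < k * Δ ∧ Nf v / k = Pf v := by
    intro v hv T hT hvT
    have h1 : Tof v = T := hTof v hv T hT hvT
    obtain ⟨a, ha⟩ := Finset.card_eq_one.1 (hcoreone T hT)
    have haU : a ∈ U := by
      have : a ∈ T ∩ U := ha ▸ Finset.mem_singleton_self a
      exact (Finset.mem_inter.1 this).2
    obtain ⟨i, -, hia⟩ := Finset.mem_image.1 haU
    have hiT : u i ∈ T := by
      have : a ∈ T ∩ U := ha ▸ Finset.mem_singleton_self a
      exact hia ▸ (Finset.mem_inter.1 this).1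
    have hP : Pf v < Δ := by
      rw [hPf_eq v hv T hT hvT i hiT]
      calc ((𝒮.filter (fun T' => u i ∈ T')).toList).idxOf T
          < ((𝒮.filter (fun T' => u i ∈ T')).toList).length :=
            List.idxOf_lt_length_iff.2 (Finset.mem_toList.2 (Finset.mem_filter.2 ⟨hT, hiT⟩))
        _ = (𝒮.filter (fun T' => u i ∈ T')).card := Finset.length_toList _
        _ ≤ Δ := hdeg (u i)
    have hS : Sf v < k := by
      simp only [hSfdef, h1]
      calc (T.toList).idxOf v < (T.toList).length :=
            List.idxOf_lt_length_iff.2 (Finset.mem_toList.2 hvT)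
        _ = T.card := Finset.length_toList _
        _ ≤ k := hcard T hT
    have hN : Nf v < k * Δ := by
      have : Pf v * k + Sf v < (Pf v + 1) * k := by
        rw [add_mul, one_mul]; omega
      calc Nf v < (Pf v + 1) * k := this
        _ ≤ Δ * k := Nat.mul_le_mul_right k (by omega)
        _ = k * Δ := Nat.mul_comm Δ k
    have hNk : Nf v / k = Pf v := by
      simp only [hNfdef]
      rw [Nat.mul_comm (Pf v) k, Nat.mul_add_div (by omega), Nat.div_eq_of_lt hS, add_zero]
    exact ⟨hP, hS, hN, hNk⟩
  -- within one set, positions differ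
  have hSf_ne : ∀ T ∈ 𝒮, ∀ v ∈ T, ∀ w ∈ T, v ∉ U → w ∉ U → v ≠ w → Sf v ≠ Sf w := by
    intro T hT v hv w hw hvU hwU hvw
    have h1 : Tof v = T := hTof v hvU T hT hv
    have h2 : Tof w = T := hTof w hwU T hT hw
    simp only [hSfdef, h1, h2]
    intro h
    exact hvw ((List.idxOf_inj (Finset.mem_toList.2 hv)).1 h)
  -- within one set, petal indices agree
  have hPf_same : ∀ T ∈ 𝒮, ∀ v ∈ T, ∀ w ∈ T, v ∉ U → w ∉ U → Pf v = Pf w := by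
    intro T hT v hv w hw hvU hwU
    have h1 : Tof v = T := hTof v hvU T hT hv
    have h2 : Tof w = T := hTof w hwU T hT hw
    simp only [hPfdef, h1, h2]
  -- the map
  set g' : V → Fin ((k * Δ) ^ 2) → ℝ := fun v j =>
    if v ∈ U then 1 - 1/(k:ℝ)
    else if ((j.val / (k*Δ) = Nf v ∧ (j.val % (k*Δ)) / k ≠ Pf v) ∨
             (j.val % (k*Δ) = Nf v ∧ (j.val / (k*Δ)) / k ≠ Pf v)) then 1/(k:ℝ) else 0
    with hg'def
  have hrange : ∀ v j, 0 ≤ g' v j ∧ g' v j ≤ 1 := by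
    intro v j
    simp only [hg'def]
    split_ifs with h1 h2
    · constructor
      · have : 1/(k:ℝ) ≤ 1/2 := by
          apply one_div_le_one_div_of_le <;> [norm_num; exact_mod_cast hk]
        linarith
      · have : 0 < 1/(k:ℝ) := by positivity
        linarith
    · constructor
      · positivity
      · rw [div_le_one hk0]; exact_mod_cast by omega
    · norm_num
  have hub : ∀ v j, v ∉ U → g' v j ≤ 1/(k:ℝ) := by
    intro v j hv
    simp only [hg'def, if_neg hv]
    split_ifs
    · exact le_refl _
    · positivity
  refine ⟨g', hrange, ?_, ?_, ?_⟩
  -- (i)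
  · intro T hT j
    obtain ⟨a, ha⟩ := Finset.card_eq_one.1 (hcoreone T hT)
    have haU : a ∈ U := by
      have : a ∈ T ∩ U := ha ▸ Finset.mem_singleton_self a
      exact (Finset.mem_inter.1 this).2
    have haT : a ∈ T := by
      have : a ∈ T ∩ U := ha ▸ Finset.mem_singleton_self a
      exact (Finset.mem_inter.1 this).1
    have hsplit : ∑ v ∈ T, g' v j = g' a j + ∑ v ∈ T.erase a, g' v j :=
      (Finset.add_sum_erase T (fun v => g' v j) haT).symm
    have hga : g' a j = 1 - 1/(k:ℝ) := by simp only [hg'def, if_pos haU]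
    have hmem : ∀ v ∈ T.erase a, v ∈ T ∧ v ∉ U := by
      intro v hv
      refine ⟨Finset.mem_of_mem_erase hv, fun hvU => ?_⟩
      have : v ∈ T ∩ U := Finset.mem_inter.2 ⟨Finset.mem_of_mem_erase hv, hvU⟩
      rw [ha] at this
      exact (Finset.ne_of_mem_erase hv) (Finset.mem_singleton.1 this)
    have hrest : ∑ v ∈ T.erase a, g' v j ≤ 1/(k:ℝ) := by
      apply sum_le_of_at_most_one_pos (by positivity)
      · intro v hv
        exact ⟨(hrange v j).1, hub v j (hmem v hv).2⟩
      · intro v hv w hw hvw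
        by_contra hcon
        push_neg at hcon
        obtain ⟨hv1, hv2⟩ := hmem v hv
        obtain ⟨hw1, hw2⟩ := hmem w hw
        have hav : ((j.val / (k*Δ) = Nf v ∧ (j.val % (k*Δ)) / k ≠ Pf v) ∨
             (j.val % (k*Δ) = Nf v ∧ (j.val / (k*Δ)) / k ≠ Pf v)) := by
          by_contra hc
          exact hcon.1 (by simp only [hg'def, if_neg hv2, if_neg hc])
        have haw : ((j.val / (k*Δ) = Nf w ∧ (j.val % (k*Δ)) / k ≠ Pf w) ∨
             (j.val % (k*Δ) = Nf w ∧ (j.val / (k*Δ)) / k ≠ Pf w)) := by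
          by_contra hc
          exact hcon.2 (by simp only [hg'def, if_neg hw2, if_neg hc])
        have hPvw : Pf v = Pf w := hPf_same T hT v hv1 w hw1 hv2 hw2
        have hSvw : Sf v ≠ Sf w := hSf_ne T hT v hv1 w hw1 hv2 hw2 hvw
        have hNvw : Nf v ≠ Nf w := by
          simp only [hNfdef]; rw [hPvw]; omega
        obtain ⟨-, -, -, hNkv⟩ := hfacts v hv2 T hT hv1
        obtain ⟨-, -, -, hNkw⟩ := hfacts w hw2 T hT hw1
        rcases hav with ⟨h1, h2⟩ | ⟨h1, h2⟩ <;> rcases haw with ⟨h3, h4⟩ | ⟨h3, h4⟩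
        · exact hNvw (h1.symm.trans h3)
        · exact h2 (by rw [h3, hNkw, ← hPvw])
        · exact h4 (by rw [h1, hNkv, hPvw])
        · exact hNvw (h1.symm.trans h3)
    rw [hsplit, hga]
    linarith
  -- (ii)
  · intro S hS hScard j
    have hb : ∀ v ∈ S, g' v j ≤ 1/(k:ℝ) := by
      intro v hv
      apply hub v j
      intro hvU
      have : v ∈ S ∩ U := Finset.mem_inter.2 ⟨hv, hvU⟩
      rw [hS] at this
      exact absurd this (Finset.notMem_empty v)
    calc ∑ v ∈ S, g' v j ≤ S.card • (1/(k:ℝ)) := Finset.sum_le_card_nsmul S _ _ hb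
      _ = (S.card : ℝ) * (1/(k:ℝ)) := by rw [nsmul_eq_mul]
      _ ≤ (k:ℝ) * (1/(k:ℝ)) := by
          apply mul_le_mul_of_nonneg_right (by exact_mod_cast hScard) (by positivity)
      _ = 1 := by field_simp
  -- (iii)
  · intro i S hSsub huiS hnot
    have key : ∀ v ∈ S.erase (u i), ∃ T ∈ 𝒮, u i ∈ T ∧ v ∈ T ∧ v ∉ U ∧ Tof v = T := by
      intro v hv
      have hvS : v ∈ S := Finset.mem_of_mem_erase hv
      have hvne : v ≠ u i := Finset.ne_of_mem_erase hv
      have := hSsub hvS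
      rcases Finset.mem_insert.1 this with h | h
      · exact absurd h hvne
      · obtain ⟨T, hTmem, hvT⟩ := Finset.mem_biUnion.1 h
        obtain ⟨hT𝒮, hiT⟩ := Finset.mem_filter.1 hTmem
        have hvT' : v ∈ T := Finset.mem_of_mem_erase hvT
        have hvU : v ∉ U := by
          intro hvU
          obtain ⟨l, -, hl⟩ := Finset.mem_image.1 hvU
          have : l = i := hcoreuniq T hT𝒮 l i (hl ▸ hvT') hiT
          exact hvne (by rw [← hl, this])
        exact ⟨T, hT𝒮, hiT, hvT', hvU, hTof v hvU T hT𝒮 hvT'⟩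
    -- find two vertices in distinct petals
    obtain ⟨x, hx, y, hy, hxy⟩ : ∃ x ∈ S.erase (u i), ∃ y ∈ S.erase (u i), Tof x ≠ Tof y := by
      by_contra hc
      push_neg at hc
      rcases Finset.eq_empty_or_nonempty (S.erase (u i)) with he | ⟨v₀, hv₀⟩
      · have hSsing : S = {u i} := by
          apply Finset.eq_singleton_iff_unique_mem.2
          refine ⟨huiS, fun w hw => ?_⟩
          by_contra hwne
          exact absurd (Finset.mem_erase.2 ⟨hwne, hw⟩) (he ▸ Finset.notMem_empty w)
        obtain ⟨T, hT, hiT⟩ := hcorecov i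
        exact hnot ⟨T, hT, by rw [hSsing]; exact Finset.singleton_subset_iff.2 hiT⟩
      · obtain ⟨T₀, hT₀, hiT₀, hv₀T₀, -, hTofv₀⟩ := key v₀ hv₀
        apply hnot
        refine ⟨T₀, hT₀, fun w hw => ?_⟩
        by_cases hwi : w = u i
        · exact hwi ▸ hiT₀
        · obtain ⟨T, hT, hiT, hwT, hwU, hTofw⟩ := key w (Finset.mem_erase.2 ⟨hwi, hw⟩)
          have : Tof w = Tof v₀ := hc w (Finset.mem_erase.2 ⟨hwi, hw⟩) v₀ hv₀
          rw [← hTofv₀, ← this, hTofw]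
          exact hwT
    obtain ⟨Tx, hTx, hiTx, hxTx, hxU, hTofx⟩ := key x hx
    obtain ⟨Ty, hTy, hiTy, hyTy, hyU, hTofy⟩ := key y hy
    have hTne : Tx ≠ Ty := by
      intro h; exact hxy (by rw [hTofx, hTofy, h])
    have hxyne : x ≠ y := fun h => hxy (h ▸ rfl)
    have hPne : Pf x ≠ Pf y := by
      rw [hPf_eq x hxU Tx hTx hxTx i hiTx, hPf_eq y hyU Ty hTy hyTy i hiTy]
      intro h
      exact hTne ((List.idxOf_inj
        (Finset.mem_toList.2 (Finset.mem_filter.2 ⟨hTx, hiTx⟩))).1 h)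
    obtain ⟨-, -, hNx, hNkx⟩ := hfacts x hxU Tx hTx hxTx
    obtain ⟨-, -, hNy, hNky⟩ := hfacts y hyU Ty hTy hyTy
    have hjlt : Nf x * (k*Δ) + Nf y < (k*Δ)^2 := by
      calc Nf x * (k*Δ) + Nf y < Nf x * (k*Δ) + (k*Δ) := Nat.add_lt_add_left hNy _
        _ = (Nf x + 1) * (k*Δ) := by ring
        _ ≤ (k*Δ) * (k*Δ) := Nat.mul_le_mul_right _ (by omega)
        _ = (k*Δ)^2 := (pow_two _).symm
    refine ⟨⟨Nf x * (k*Δ) + Nf y, hjlt⟩, ?_⟩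
    set j : Fin ((k*Δ)^2) := ⟨Nf x * (k*Δ) + Nf y, hjlt⟩ with hjdef
    have hjdiv : j.val / (k*Δ) = Nf x := by
      simp only [hjdef]
      rw [Nat.mul_comm (Nf x) (k*Δ), Nat.mul_add_div hkΔ, Nat.div_eq_of_lt hNy, add_zero]
    have hjmod : j.val % (k*Δ) = Nf y := by
      simp only [hjdef]
      rw [Nat.mul_comm (Nf x) (k*Δ), Nat.mul_add_mod, Nat.mod_eq_of_lt hNy]
    have hgx : g' x j = 1/(k:ℝ) := by
      simp only [hg'def, if_neg hxU]
      rw [if_pos (Or.inl ⟨hjdiv, by rw [hjmod, hNky]; exact fun h => hPne h.symm⟩)]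
    have hgy : g' y j = 1/(k:ℝ) := by
      simp only [hg'def, if_neg hyU]
      rw [if_pos (Or.inr ⟨hjmod, by rw [hjdiv, hNkx]; exact hPne⟩)]
    have hgu : g' (u i) j = 1 - 1/(k:ℝ) := by
      simp only [hg'def, if_pos (show u i ∈ U from Finset.mem_image_of_mem u (Finset.mem_univ i))]
    have hsub : ({u i, x, y} : Finset V) ⊆ S := by
      intro w hw
      rcases Finset.mem_insert.1 hw with h | hw
      · exact h ▸ huiS
      rcases Finset.mem_insert.1 hw with h | hw
      · exact h ▸ Finset.mem_of_mem_erase hx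
      · exact (Finset.mem_singleton.1 hw) ▸ Finset.mem_of_mem_erase hy
    have hsum3 : ∑ v ∈ ({u i, x, y} : Finset V), g' v j = 1 + 1/(k:ℝ) := by
      have hui_x : u i ≠ x := fun h => (Finset.ne_of_mem_erase hx) h.symm
      have hui_y : u i ≠ y := fun h => (Finset.ne_of_mem_erase hy) h.symm
      rw [Finset.sum_insert (by simp [hui_x, hui_y]),
          Finset.sum_insert (by simp [hxyne]), Finset.sum_singleton,
          hgu, hgx, hgy]
      ring
    have hmono : ∑ v ∈ ({u i, x, y} : Finset V), g' v j ≤ ∑ v ∈ S, g' v j := by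
      apply Finset.sum_le_sum_of_subset_of_nonneg hsub
      intro w _ _
      exact (hrange w j).1
    have : (0:ℝ) < 1/(k:ℝ) := by positivity
    linarith [hsum3 ▸ hmono]
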